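/- Let G = (V, E) be a finite simple graph, for each v ∈ V let X_v be a set, and let X ⊆ ∏_{v∈V} X_v be strongly d-compatible with G. Let W ⊆ V be an induced forest of G (isolated vertices allowed), and let L ⊆ W be a set obtained by choosing, from each connected component of G[W] containing at least one edge, all of its leaves except exactly one (single-vertex components contribute no vertex to L). Then x_{L ∪ (V \ W)} d^{|W \ L|}-determines x_{W \ L}; in particular cdim(X) ≤ |V| − |W| + |L|. -/

import Mathlib

/-- `x_A` `d`-determines `x_B`. -/
def Determines {V : Type*} {F : V → Type*} (S : Set (∀ v, F v))
    (A B : Set V) (d : ℕ) : Prop :=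
  ∀ c : ∀ a : A, F a,
    ((fun x : ∀ v, F v => fun b : B => x b) ''
      {x ∈ S | ∀ a : A, x a = c a}).encard ≤ (d : ℕ∞)

/-- `S` is `d`-compatible with the graph `G`. -/
def Compatible {V : Type*} {F : V → Type*} (S : Set (∀ v, F v))
    (G : SimpleGraph V) (d : ℕ) : Prop :=
  ∀ v w, G.Adj v w →
    Determines S ((insert v (G.neighborSet v)) \ {w}) {w} d

/-- `S` is strongly `d`-compatible with the graph `G`. -/
def StronglyCompatible {V : Type*} {F : V → Type*} (S : Set (∀ v, F v))
    (G : SimpleGraph V) (d : ℕ) : Prop :=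
  Compatible S G d ∧ ∀ v, Determines S (G.neighborSet v) {v} d

/-- The combinatorial dimension of `S`. -/
noncomputable def cdim {V : Type*} {F : V → Type*} (S : Set (∀ v, F v)) : ℕ :=
  sInf {n : ℕ | ∃ A : Set V, A.ncard = n ∧ ∃ d : ℕ, Determines S A Set.univ d}

open SimpleGraph

section Aux

lemma encard_le_mul_of_fibers {α β : Type*} (f : α → β) (s : Set α) (e d : ℕ)
    (h1 : (f '' s).encard ≤ e) (h2 : ∀ y : β, (s ∩ f ⁻¹' {y}).encard ≤ d) :
    s.encard ≤ ((e * d : ℕ) : ℕ∞) := by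
  have hfin : (f '' s).Finite := by
    rw [← Set.encard_lt_top_iff]; exact lt_of_le_of_lt h1 (by simp)
  have main : ∀ t : Set β, t.Finite → ∀ s' : Set α, (f '' s') ⊆ t →
      (∀ y : β, (s' ∩ f ⁻¹' {y}).encard ≤ d) → s'.encard ≤ t.encard * d := by
    intro t ht
    refine Set.Finite.induction_on (motive := fun t _ => ∀ s' : Set α, (f '' s') ⊆ t →
      (∀ y : β, (s' ∩ f ⁻¹' {y}).encard ≤ d) → s'.encard ≤ t.encard * d) t ht ?_ ?_
    · intro s' hsub _
      have : s' = ∅ := by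
        by_contra h
        obtain ⟨x, hx⟩ := Set.nonempty_iff_ne_empty.mpr h
        exact absurd (hsub ⟨x, hx, rfl⟩) (by simp)
      simp [this]
    · intro y t' hy ht' ih s' hsub h2'
      have hdecomp : s' = (s' ∩ f ⁻¹' {y}) ∪ (s' \ f ⁻¹' {y}) := by
        ext x; by_cases hx : f x = y <;> simp [hx]
      calc s'.encard ≤ (s' ∩ f ⁻¹' {y}).encard + (s' \ f ⁻¹' {y}).encard := by
            conv_lhs => rw [hdecomp]
            exact Set.encard_union_le _ _
        _ ≤ d + t'.encard * d := by
            refine add_le_add (h2' y) (ih _ ?_ ?_)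
            · rintro z ⟨x, hx, rfl⟩
              rcases hsub ⟨x, hx.1, rfl⟩ with h | h
              · exact absurd h hx.2
              · exact h
            · intro z
              exact le_trans (Set.encard_mono (by intro a ha; exact ⟨ha.1.1, ha.2⟩)) (h2' z)
        _ = (t'.encard + 1) * d := by ring
        _ = (insert y t').encard * d := by rw [Set.encard_insert_of_notMem hy]
  calc s.encard ≤ (f '' s).encard * d := main _ hfin s le_rfl h2
    _ ≤ (e : ℕ∞) * d := mul_le_mul_left h1 _
    _ = ((e * d : ℕ) : ℕ∞) := by push_cast; ring

lemma Determines.mono_left {V : Type*} {F : V → Type*} {S : Set (∀ v, F v)}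
    {A A' B : Set V} {d : ℕ} (h : Determines S A B d) (hAA : A ⊆ A') :
    Determines S A' B d := by
  intro c
  refine le_trans (Set.encard_mono (Set.image_mono ?_)) (h (fun a => c ⟨a.1, hAA a.2⟩))
  rintro x ⟨hxS, hx⟩
  exact ⟨hxS, fun a => hx ⟨a.1, hAA a.2⟩⟩

lemma determines_empty {V : Type*} {F : V → Type*} (S : Set (∀ v, F v)) (A : Set V) :
    Determines S A (∅ : Set V) 1 := by
  intro c
  rw [show ((1:ℕ):ℕ∞) = 1 by rfl]
  rw [Set.encard_le_one_iff]
  rintro x y ⟨x', _, rfl⟩ ⟨y', _, rfl⟩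
  funext b
  exact absurd b.2 (Set.notMem_empty b.1)

lemma Determines.step {V : Type*} {F : V → Type*} {S : Set (∀ v, F v)}
    {A B : Set V} {v : V} {e d : ℕ}
    (h1 : Determines S A B e) (h2 : Determines S (A ∪ B) {v} d) :
    Determines S A (insert v B) (e * d) := by
  intro c
  set Fib := {x ∈ S | ∀ a : A, x a = c a} with hFib
  set T := (fun x : ∀ w, F w => fun b : (insert v B : Set V) => x b) '' Fib with hT
  let g : (∀ b : (insert v B : Set V), F b) → (∀ b : B, F b) :=
    fun z => fun b => z ⟨b.1, Set.mem_insert_of_mem _ b.2⟩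
  apply encard_le_mul_of_fibers g T e d
  · refine le_trans (Set.encard_mono ?_) (h1 c)
    rintro z ⟨w, ⟨x, hx, rfl⟩, rfl⟩
    exact ⟨x, hx, rfl⟩
  · intro y
    classical
    let c' : ∀ a : (A ∪ B : Set V), F a :=
      fun a => if h : a.1 ∈ A then c ⟨a.1, h⟩ else y ⟨a.1, a.2.resolve_left h⟩
    let h : (∀ b : (insert v B : Set V), F b) → (∀ b : ({v} : Set V), F b) :=
      fun z => fun b => z ⟨b.1, Set.mem_insert_iff.mpr (Or.inl b.2)⟩
    have hinj : Set.InjOn h (T ∩ g ⁻¹' {y}) := by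
      rintro z₁ ⟨hz₁, hgz₁⟩ z₂ ⟨hz₂, hgz₂⟩ heq
      funext b
      rcases Set.mem_insert_iff.mp b.2 with hb | hb
      · have e1 : z₁ b = h z₁ ⟨b.1, hb⟩ := by
          show z₁ b = z₁ ⟨b.1, _⟩; congr 1
        have e2 : z₂ b = h z₂ ⟨b.1, hb⟩ := by
          show z₂ b = z₂ ⟨b.1, _⟩; congr 1
        rw [e1, e2, heq]
      · have e1 : z₁ b = g z₁ ⟨b.1, hb⟩ := by
          show z₁ b = z₁ ⟨b.1, _⟩; congr 1
        have e2 : z₂ b = g z₂ ⟨b.1, hb⟩ := by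
          show z₂ b = z₂ ⟨b.1, _⟩; congr 1
        rw [e1, e2]
        rw [Set.mem_preimage, Set.mem_singleton_iff] at hgz₁ hgz₂
        rw [hgz₁, hgz₂]
    have himg : h '' (T ∩ g ⁻¹' {y}) ⊆
        (fun x : ∀ w, F w => fun b : ({v} : Set V) => x b) ''
          {x ∈ S | ∀ a : (A ∪ B : Set V), x a = c' a} := by
      rintro w ⟨z, ⟨⟨x, hx, rfl⟩, hgz⟩, rfl⟩
      rw [Set.mem_preimage, Set.mem_singleton_iff] at hgz
      refine ⟨x, ⟨hx.1, ?_⟩, rfl⟩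
      intro a
      by_cases ha : a.1 ∈ A
      · have : c' a = c ⟨a.1, ha⟩ := dif_pos ha
        rw [this]
        exact hx.2 ⟨a.1, ha⟩
      · have hB : a.1 ∈ B := a.2.resolve_left ha
        have : c' a = y ⟨a.1, hB⟩ := dif_neg ha
        rw [this, ← hgz]
    calc (T ∩ g ⁻¹' {y}).encard = (h '' (T ∩ g ⁻¹' {y})).encard := (hinj.encard_image).symm
      _ ≤ _ := Set.encard_mono himg
      _ ≤ d := h2 c'

lemma Determines.to_univ {V : Type*} {F : V → Type*} {S : Set (∀ v, F v)}
    {A B : Set V} {d : ℕ} (h : Determines S A B d) (hAB : A ∪ B = Set.univ) :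
    Determines S A Set.univ d := by
  intro c
  let g : (∀ b : (Set.univ : Set V), F b) → (∀ b : B, F b) :=
    fun z => fun b => z ⟨b.1, trivial⟩
  have hinj : Set.InjOn g
      ((fun x : ∀ v, F v => fun b : (Set.univ : Set V) => x b) ''
        {x ∈ S | ∀ a : A, x a = c a}) := by
    rintro z₁ ⟨x₁, hx₁, rfl⟩ z₂ ⟨x₂, hx₂, rfl⟩ heq
    funext b
    have hb : b.1 ∈ A ∪ B := by rw [hAB]; trivial
    rcases hb with hb | hb
    · show x₁ b.1 = x₂ b.1
      rw [hx₁.2 ⟨b.1, hb⟩, hx₂.2 ⟨b.1, hb⟩]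
    · exact congrFun heq ⟨b.1, hb⟩
  rw [← hinj.encard_image]
  refine le_trans (Set.encard_mono ?_) (h c)
  rintro z ⟨w, ⟨x, hx, rfl⟩, rfl⟩
  exact ⟨x, hx, rfl⟩

variable {α : Type*} [DecidableEq α] {Γ : SimpleGraph α}

lemma dist_lt_of_mem_support {v r u : α} (p : Γ.Walk v r) (hu : u ∈ p.support)
    (hne : u ≠ v) : Γ.dist u r < p.length := by
  have hspec := p.take_spec hu
  have hlen : (p.takeUntil u hu).length + (p.dropUntil u hu).length = p.length := by
    rw [← Walk.length_append, hspec]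
  have h1 : (p.takeUntil u hu).length ≠ 0 := by
    intro h0
    exact hne (Walk.eq_of_length_eq_zero h0).symm
  have h2 : Γ.dist u r ≤ (p.dropUntil u hu).length := SimpleGraph.dist_le _
  omega

lemma exists_path_length_dist {u r : α} (h : Γ.Reachable u r) :
    ∃ p : Γ.Walk u r, p.IsPath ∧ p.length = Γ.dist u r := by
  obtain ⟨w, hw⟩ := h.exists_walk_length_eq_dist
  refine ⟨w.bypass, w.bypass_isPath, le_antisymm ?_ (SimpleGraph.dist_le _)⟩
  exact le_trans w.length_bypass_le hw.le

lemma adj_dist_ne (hac : Γ.IsAcyclic) {u v r : α} (huv : Γ.Adj u v)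
    (hvr : Γ.Reachable v r) : Γ.dist u r ≠ Γ.dist v r := by
  intro heq
  have hur : Γ.Reachable u r := huv.reachable.trans hvr
  rcases Nat.eq_zero_or_pos (Γ.dist v r) with h0 | hpos
  · have hv : v = r := hvr.dist_eq_zero_iff.mp h0
    have hu : u = r := hur.dist_eq_zero_iff.mp (heq.trans h0)
    exact Γ.irrefl (hu ▸ hv ▸ huv)
  · obtain ⟨p, hp, hplen⟩ := exists_path_length_dist hvr
    obtain ⟨pu, hpu, hpulen⟩ := exists_path_length_dist hur
    have hu_not : u ∉ p.support := by
      intro hmem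
      have := dist_lt_of_mem_support p hmem huv.ne
      omega
    have hq : (Walk.cons huv p).IsPath := hp.cons hu_not
    have := hac.path_unique ⟨pu, hpu⟩ ⟨Walk.cons huv p, hq⟩
    have hlen := congrArg (fun q : Γ.Path u r => q.1.length) this
    simp only [Walk.length_cons] at hlen
    omega

lemma unique_parent (hac : Γ.IsAcyclic) {u v v' r : α} (huv : Γ.Adj u v)
    (huv' : Γ.Adj u v') (hvr : Γ.Reachable v r) (hv'r : Γ.Reachable v' r)
    (h1 : Γ.dist v r < Γ.dist u r) (h2 : Γ.dist v' r < Γ.dist u r) : v = v' := by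
  have hur : Γ.Reachable u r := huv.reachable.trans hvr
  obtain ⟨p, hp, hplen⟩ := exists_path_length_dist hvr
  obtain ⟨p', hp', hplen'⟩ := exists_path_length_dist hv'r
  have hu_not : u ∉ p.support := by
    intro hmem
    have := dist_lt_of_mem_support p hmem huv.ne
    omega
  have hu_not' : u ∉ p'.support := by
    intro hmem
    have := dist_lt_of_mem_support p' hmem huv'.ne
    omega
  have hpath : (Walk.cons huv p).IsPath := hp.cons hu_not
  have hpath' : (Walk.cons huv' p').IsPath := hp'.cons hu_not'
  have hle : Γ.dist u r ≤ Γ.dist v r + 1 := by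
    have := SimpleGraph.dist_le (Walk.cons huv p)
    simpa [Walk.length_cons, hplen] using this
  have hle' : Γ.dist u r ≤ Γ.dist v' r + 1 := by
    have := SimpleGraph.dist_le (Walk.cons huv' p')
    simpa [Walk.length_cons, hplen'] using this
  have := hac.path_unique ⟨Walk.cons huv p, hpath⟩ ⟨Walk.cons huv' p', hpath'⟩
  have hv1 := congrArg (fun q : Γ.Path u r => q.1.getVert 1) this
  simpa [Walk.getVert_cons_succ, Walk.getVert_zero] using hv1

lemma leaf_dist_lt {q v r : α} (huniq : ∀ x, Γ.Adj q x → x = v)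
    (hqr : q ≠ r) (hre : Γ.Reachable q r) : Γ.dist v r < Γ.dist q r := by
  obtain ⟨w, hwlen⟩ := hre.exists_walk_length_eq_dist
  cases w with
  | nil => exact absurd rfl hqr
  | @cons _ x _ h p =>
    have hle : Γ.dist v r ≤ p.length := by
      rw [← huniq x h]; exact SimpleGraph.dist_le p
    rw [Walk.length_cons] at hwlen
    omega

end Aux

/-- Forest Bound, strong form: let `S` be strongly `d`-compatible with `G`, let
`W` be an induced forest of `G` (isolated vertices allowed), and let `L ⊆ W`
consist of leaves of `G[W]` such that from each connected component of `G[W]`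
containing at least one edge exactly one leaf is excluded from `L` (single-vertex
components contribute no vertex to `L`).  Then `x_{L ∪ (V \ W)}`
`d^{|W \ L|}`-determines `x_{W \ L}`; in particular
`cdim S ≤ |V| - |W| + |L|`. -/
theorem forest_bound_strong {V : Type*} [Fintype V] (G : SimpleGraph V)
    {F : V → Type*} (S : Set (∀ v, F v)) (d : ℕ)
    (hcomp : StronglyCompatible S G d)
    (W : Set V)
    (hforest : (G.induce W).IsAcyclic)
    (L : Set V) (hLW : L ⊆ W)
    (hleaf : ∀ v ∈ L, (G.neighborSet v ∩ W).ncard = 1)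
    (hchoice : ∀ v : W, (G.neighborSet (v : V) ∩ W).Nonempty →
      ∃! w : W, (G.induce W).Reachable v w ∧
        (G.neighborSet (w : V) ∩ W).ncard = 1 ∧ (w : V) ∉ L) :
    Determines S (L ∪ Wᶜ) (W \ L) (d ^ (W \ L).ncard) ∧
      cdim S ≤ Fintype.card V - W.ncard + L.ncard := by
  classical
  obtain ⟨hcomp1, hcomp2⟩ := hcomp
  choose root hP hU using hchoice
  have hne : ∀ {p q : W}, (G.induce W).Adj p q → (G.neighborSet (p : V) ∩ W).Nonempty :=
    fun {p q} h => ⟨q.1, h, q.2⟩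
  have hsame : ∀ (p q : W) (hadj : (G.induce W).Adj p q),
      root p (hne hadj) = root q (hne hadj.symm) := by
    intro p q hadj
    have h2 := hP q (hne hadj.symm)
    exact (hU p (hne hadj) (root q (hne hadj.symm))
      ⟨hadj.reachable.trans h2.1, h2.2.1, h2.2.2⟩).symm
  have key : ∀ (n : ℕ) (B : Set V), B ⊆ W \ L → B.ncard = n →
      (∀ (p q : W) (hadj : (G.induce W).Adj p q),
        (p : V) ∈ W \ L → (p : V) ∉ B →
        (G.induce W).dist q (root q (hne hadj.symm)) <
          (G.induce W).dist p (root p (hne hadj)) →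
        (q : V) ∈ W \ L ∧ (q : V) ∉ B) →
      Determines S (L ∪ Wᶜ) B (d ^ n) := by
    intro n
    induction n with
    | zero =>
      intro B hBsub hB0 _
      rw [Set.ncard_eq_zero (Set.toFinite B)] at hB0
      rw [hB0, pow_zero]
      exact determines_empty S _
    | succ m ih =>
      intro B hBsub hBn hclos
      have peel : ∀ v : W, (v : V) ∈ B →
          Determines S ((L ∪ Wᶜ) ∪ (B \ {(v : V)})) {(v : V)} d →
          (∀ (p q : W) (hadj : (G.induce W).Adj p q),
            (p : V) ∈ W \ L → (p : V) ∉ B \ {(v : V)} →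
            (G.induce W).dist q (root q (hne hadj.symm)) <
              (G.induce W).dist p (root p (hne hadj)) →
            (q : V) ∈ W \ L ∧ (q : V) ∉ B \ {(v : V)}) →
          Determines S (L ∪ Wᶜ) B (d ^ (m + 1)) := by
        intro v hvB hdet hclos'
        have hBv : B = insert (v : V) (B \ {(v : V)}) := by
          rw [Set.insert_diff_singleton, Set.insert_eq_of_mem hvB]
        have hcard : (B \ {(v : V)}).ncard = m := by
          have h1 := Set.ncard_diff_singleton_of_mem hvB
          omega
        have hres := (ih (B \ {(v : V)})
          (fun x hx => hBsub hx.1) hcard hclos').step hdet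
        rw [pow_succ, hBv]
        exact hres
      by_cases hiso : ∃ v : W, (v : V) ∈ B ∧ ¬(G.neighborSet (v : V) ∩ W).Nonempty
      · obtain ⟨v, hvB, hviso⟩ := hiso
        refine peel v hvB ?_ ?_
        · refine (hcomp2 (v : V)).mono_left ?_
          intro x hx
          by_cases hxW : x ∈ W
          · exact absurd ⟨x, hx, hxW⟩ hviso
          · exact Or.inl (Or.inr hxW)
        · intro p q hadj hpWL hpnB hlt
          by_cases hpB : (p : V) ∈ B
          · have hpv : p = v := by
              refine Subtype.ext ?_
              by_contra hne'
              exact hpnB ⟨hpB, hne'⟩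
            exact absurd (hne (hpv ▸ hadj)) hviso
          · obtain ⟨h1, h2⟩ := hclos p q hadj hpWL hpB hlt
            exact ⟨h1, fun hq => h2 hq.1⟩
      · push_neg at hiso
        have hBne : B.Nonempty := by
          rw [Set.nonempty_iff_ne_empty]
          intro h0
          rw [h0, Set.ncard_empty] at hBn
          omega
        obtain ⟨b0, hb0⟩ := hBne
        have hb0W : b0 ∈ W := (hBsub hb0).1
        have hKne : ∃ k : ℕ, ∃ v : W, ∃ h : (v : V) ∈ B,
            (G.induce W).dist v (root v (hiso v h)) = k :=
          ⟨_, ⟨b0, hb0W⟩, hb0, rfl⟩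
        set K : Set ℕ := {k | ∃ v : W, ∃ h : (v : V) ∈ B,
          (G.induce W).dist v (root v (hiso v h)) = k} with hK
        obtain ⟨v, hvB, hveq⟩ := Nat.sInf_mem (hKne : K.Nonempty)
        have hmin : ∀ (u : W) (hu : (u : V) ∈ B),
            sInf K ≤ (G.induce W).dist u (root u (hiso u hu)) :=
          fun u hu => Nat.sInf_le ⟨u, hu, rfl⟩
        have hv' : (G.neighborSet (v : V) ∩ W).Nonempty := hiso v hvB
        have hvr : (G.induce W).Reachable v (root v hv') := (hP v hv').1
        -- find a neighbour u of v which is farther from the root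
        obtain ⟨u, hadj, hgt⟩ : ∃ u : W, ∃ _ : (G.induce W).Adj v u,
            (G.induce W).dist v (root v hv') < (G.induce W).dist u (root v hv') := by
          by_cases hvroot : v = root v hv'
          · obtain ⟨x, hx⟩ := hiso v hvB
            refine ⟨⟨x, hx.2⟩, hx.1, ?_⟩
            have h0 : (G.induce W).dist v (root v hv') = 0 := by
              rw [← hvroot, SimpleGraph.dist_self]
            have hadjU : (G.induce W).Adj v ⟨x, hx.2⟩ := hx.1
            have hrU : root (⟨x, hx.2⟩ : W) (hne hadjU.symm) = root v hv' :=
              (hsame v ⟨x, hx.2⟩ hadjU).symm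
            have hner : (⟨x, hx.2⟩ : W) ≠ root v hv' := by
              intro h
              rw [h, ← hvroot] at hadjU
              exact (G.induce W).irrefl hadjU
            have hreach : (G.induce W).Reachable ⟨x, hx.2⟩ (root v hv') := by
              rw [← hrU]
              exact (hP (⟨x, hx.2⟩ : W) (hne hadjU.symm)).1
            have := hreach.pos_dist_of_ne hner
            omega
          · have hnotleaf : (G.neighborSet (v : V) ∩ W).ncard ≠ 1 := by
              intro hc
              exact hvroot (hU v hv' v ⟨Reachable.refl v, hc, (hBsub hvB).2⟩)
            have hpos : 0 < (G.neighborSet (v : V) ∩ W).ncard :=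
              (Set.ncard_pos (Set.toFinite _)).mpr hv'
            have h2lt : 1 < (G.neighborSet (v : V) ∩ W).ncard := by omega
            obtain ⟨a, b, ha, hb, hab⟩ := (Set.one_lt_ncard_iff (Set.toFinite _)).mp h2lt
            set A' : W := ⟨a, ha.2⟩
            set B' : W := ⟨b, hb.2⟩
            have hadjA : (G.induce W).Adj v A' := ha.1
            have hadjB : (G.induce W).Adj v B' := hb.1
            have hrootA : root A' (hne hadjA.symm) = root v hv' := (hsame v A' hadjA).symm
            have hrootB : root B' (hne hadjB.symm) = root v hv' := (hsame v B' hadjB).symm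
            have hreachA : (G.induce W).Reachable A' (root v hv') := by
              rw [← hrootA]; exact (hP A' (hne hadjA.symm)).1
            have hreachB : (G.induce W).Reachable B' (root v hv') := by
              rw [← hrootB]; exact (hP B' (hne hadjB.symm)).1
            have hdA : (G.induce W).dist A' (root v hv') ≠
                (G.induce W).dist v (root v hv') := adj_dist_ne hforest hadjA.symm hvr
            have hdB : (G.induce W).dist B' (root v hv') ≠
                (G.induce W).dist v (root v hv') := adj_dist_ne hforest hadjB.symm hvr
            by_cases hcA : (G.induce W).dist v (root v hv') <
                (G.induce W).dist A' (root v hv')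
            · exact ⟨A', hadjA, hcA⟩
            · by_cases hcB : (G.induce W).dist v (root v hv') <
                  (G.induce W).dist B' (root v hv')
              · exact ⟨B', hadjB, hcB⟩
              · exfalso
                have h1 : (G.induce W).dist A' (root v hv') <
                    (G.induce W).dist v (root v hv') := by omega
                have h2 : (G.induce W).dist B' (root v hv') <
                    (G.induce W).dist v (root v hv') := by omega
                have := unique_parent hforest hadjA hadjB hreachA hreachB h1 h2
                exact hab (congrArg Subtype.val this)
        have hru : root u (hne hadj.symm) = root v hv' := (hsame v u hadj).symm
        have hreachu : (G.induce W).Reachable u (root v hv') := by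
          rw [← hru]; exact (hP u (hne hadj.symm)).1
        -- u is known: either in L or still in B
        have huLB : (u : V) ∈ L ∨ (u : V) ∈ B := by
          by_contra hcon
          push_neg at hcon
          obtain ⟨huL, huB⟩ := hcon
          have := hclos u v hadj.symm ⟨u.2, huL⟩ huB (by rw [hru]; exact hgt)
          exact this.2 hvB
        refine peel v hvB ?_ ?_
        · refine (hcomp1 (u : V) (v : V) hadj.symm).mono_left ?_
          rintro x ⟨hx1, hx2⟩
          have hxv : x ≠ (v : V) := hx2
          rcases Set.mem_insert_iff.mp hx1 with rfl | hxN
          · rcases huLB with h | h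
            · exact Or.inl (Or.inl h)
            · exact Or.inr ⟨h, hxv⟩
          · by_cases hxW : x ∈ W
            · by_cases hxL : x ∈ L
              · exact Or.inl (Or.inl hxL)
              · refine Or.inr ⟨?_, hxv⟩
                by_contra hxB
                set q : W := ⟨x, hxW⟩
                have hadjuq : (G.induce W).Adj u q := hxN
                have hrootq : root q (hne hadjuq.symm) = root v hv' := by
                  rw [(hsame u q hadjuq).symm.trans hru]
                have hreachq : (G.induce W).Reachable q (root v hv') := by
                  rw [← hrootq]; exact (hP q (hne hadjuq.symm)).1
                rcases lt_trichotomy ((G.induce W).dist q (root v hv'))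
                    ((G.induce W).dist u (root v hv')) with hlt | heq | hgt2
                · have := unique_parent hforest hadj.symm hadjuq hvr hreachq hgt hlt
                  exact hxv (congrArg Subtype.val this.symm)
                · exact adj_dist_ne hforest hadjuq.symm hreachu heq
                · have := hclos q u hadjuq.symm ⟨hxW, hxL⟩ hxB
                    (by rw [hrootq, hru]; exact hgt2)
                  rcases huLB with h | h
                  · exact this.1.2 h
                  · exact this.2 h
            · exact Or.inl (Or.inr hxW)
        · intro p q hadj' hpWL hpnB hlt
          by_cases hpB : (p : V) ∈ B
          · have hpv : p = v := by
              refine Subtype.ext ?_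
              by_contra hne'
              exact hpnB ⟨hpB, hne'⟩
            subst hpv
            have hrootq : root q (hne hadj'.symm) = root p hv' := (hsame p q hadj').symm
            have hlt' : (G.induce W).dist q (root p hv') <
                (G.induce W).dist p (root p hv') := by
              rw [hrootq] at hlt; exact hlt
            refine ⟨⟨q.2, ?_⟩, ?_⟩
            · intro hqL
              have hnc := hleaf _ hqL
              obtain ⟨a, hA⟩ := Set.ncard_eq_one.mp hnc
              have hva : (p : V) ∈ G.neighborSet (q : V) ∩ W := ⟨hadj'.symm, p.2⟩
              rw [hA, Set.mem_singleton_iff] at hva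
              have huniqx : ∀ x : W, (G.induce W).Adj q x → x = p := by
                intro x hx
                have hmem : (x : V) ∈ G.neighborSet (q : V) ∩ W := ⟨hx, x.2⟩
                rw [hA, Set.mem_singleton_iff] at hmem
                exact Subtype.ext (hmem.trans hva.symm)
              have hqner : q ≠ root p hv' := by
                intro h
                exact (hP p hv').2.2 (h ▸ hqL)
              have hreachq : (G.induce W).Reachable q (root p hv') :=
                hadj'.symm.reachable.trans (hP p hv').1
              have := leaf_dist_lt huniqx hqner hreachq
              omega
            · intro hqB
              have hqB' : (q : V) ∈ B := hqB.1
              have hm := hmin q hqB'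
              have hrootq2 : root q (hiso q hqB') = root p hv' := (hsame p q hadj').symm
              rw [hrootq2] at hm
              have hveq' : (G.induce W).dist p (root p hv') = sInf K := hveq
              omega
          · obtain ⟨h1, h2⟩ := hclos p q hadj' hpWL hpB hlt
            exact ⟨h1, fun hq => h2 hq.1⟩
  have hclos_top : ∀ (p q : W) (hadj : (G.induce W).Adj p q),
      (p : V) ∈ W \ L → (p : V) ∉ W \ L →
      (G.induce W).dist q (root q (hne hadj.symm)) <
        (G.induce W).dist p (root p (hne hadj)) →
      (q : V) ∈ W \ L ∧ (q : V) ∉ W \ L :=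
    fun p q hadj hpWL hpnB _ => absurd hpWL hpnB
  have part1 : Determines S (L ∪ Wᶜ) (W \ L) (d ^ (W \ L).ncard) :=
    key _ _ Set.Subset.rfl rfl hclos_top
  refine ⟨part1, ?_⟩
  have huniv : (L ∪ Wᶜ) ∪ (W \ L) = Set.univ := by
    ext x
    simp only [Set.mem_union, Set.mem_compl_iff, Set.mem_diff, Set.mem_univ, iff_true]
    tauto
  have part2 : Determines S (L ∪ Wᶜ) Set.univ (d ^ (W \ L).ncard) := part1.to_univ huniv
  have hle : cdim S ≤ (L ∪ Wᶜ).ncard := Nat.sInf_le ⟨L ∪ Wᶜ, rfl, _, part2⟩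
  have hdisj : Disjoint L Wᶜ := Set.disjoint_left.mpr fun x hxL hxWc => hxWc (hLW hxL)
  have hcard : (L ∪ Wᶜ).ncard = L.ncard + Wᶜ.ncard :=
    Set.ncard_union_eq hdisj (Set.toFinite _) (Set.toFinite _)
  have hcompl : W.ncard + Wᶜ.ncard = Fintype.card V := by
    have h := Set.ncard_add_ncard_compl W (Set.toFinite _) (Set.toFinite _)
    rw [Nat.card_eq_fintype_card] at h
    exact h
  have hLsub : L.ncard ≤ W.ncard := Set.ncard_le_ncard hLW (Set.toFinite _)
  omega
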